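/- Jacobi's identity: f_1^3 = ∑_{j≥0} (−1)^j (2j+1) q^{j(j+1)/2} as formal power series. -/

import Mathlib

open LaurentPolynomial Polynomial Finset

abbrev K := LaurentPolynomial ℤ

/-- Gaussian binomial `[m choose k]_q` as a Laurent polynomial (in fact a polynomial). -/
noncomputable def gb : ℕ → ℤ → K
  | 0, k => if k = 0 then 1 else 0
  | (m+1), k => gb m k + T (m+1-k) * gb m (k-1)

lemma gb_of_neg : ∀ (m : ℕ) {k : ℤ}, k < 0 → gb m k = 0 := by
  intro m
  induction m with
  | zero => intro k hk; simp [gb, hk.ne]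
  | succ m ih =>
      intro k hk
      rw [gb, ih hk, ih (by omega), mul_zero, add_zero]

lemma gb_of_gt : ∀ (m : ℕ) {k : ℤ}, (m : ℤ) < k → gb m k = 0 := by
  intro m
  induction m with
  | zero => intro k hk; simp [gb]; omega
  | succ m ih =>
      intro k hk
      rw [gb, ih (by push_cast; omega), ih (by push_cast at hk ⊢; omega), mul_zero, add_zero]

lemma gb_zero_right (m : ℕ) : gb m 0 = 1 := by
  induction m with
  | zero => simp [gb]
  | succ m ih => rw [gb, ih, gb_of_neg m (by omega), mul_zero, add_zero]

lemma gb_ruleA (m : ℕ) (k : ℤ) : gb (m+1) k = gb m k + T (m+1-k) * gb m (k-1) := rfl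

lemma gb_ruleB : ∀ (m : ℕ) (k : ℤ), gb (m+1) k = T k * gb m k + gb m (k-1) := by
  intro m
  induction m with
  | zero =>
      intro k
      rcases eq_or_ne k 0 with rfl | h0
      · simp [gb]
      rcases eq_or_ne k 1 with rfl | h1
      · norm_num [gb]
      · have g0 : gb 0 k = 0 := by simp [gb, h0]
        have g1 : gb 0 (k-1) = 0 := by
          show (if k - 1 = 0 then (1:K) else 0) = 0
          rw [if_neg (by omega)]
        rw [gb_ruleA, g0, g1]; ring
  | succ m ih =>
      intro k
      have h1 : (T ((m:ℤ)+1-(k-1)) : K) * T (k-1) = T k * T ((m:ℤ)+1-k) := by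
        rw [← T_add, ← T_add]; ring_nf
      rw [gb_ruleA (m+1) k]
      nth_rewrite 1 [ih k]
      nth_rewrite 1 [ih (k-1)]
      rw [gb_ruleA m k, gb_ruleA m (k-1),
        show ((m+1:ℕ):ℤ)+1-k = (m:ℤ)+1-(k-1) by push_cast; ring]
      linear_combination gb m (k-1) * h1

lemma gb_zero_eq (k : ℤ) : gb 0 k = if k = 0 then 1 else 0 := rfl


lemma gb_symm : ∀ (m : ℕ) (k : ℤ), gb m ((m:ℤ) - k) = gb m k := by
  intro m
  induction m with
  | zero =>
      intro k
      rcases eq_or_ne k 0 with rfl | h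
      · norm_num
      · rw [gb_zero_eq, gb_zero_eq, if_neg (by omega), if_neg h]
  | succ m ih =>
      intro k
      have key : gb (m+1) ((m:ℤ)-(k-1)) = gb m (k-1) + T k * gb m k := by
        have h := gb_ruleA m ((m:ℤ)-(k-1))
        rw [show (m:ℤ)+1-((m:ℤ)-(k-1)) = k by ring,
            show (m:ℤ)-(k-1)-1 = (m:ℤ)-k by ring, ih (k-1), ih k] at h
        exact h
      rw [show ((m+1:ℕ):ℤ) - k = (m:ℤ)-(k-1) by push_cast; ring, key, gb_ruleB]
      ring

lemma gb_diag (m : ℕ) : gb m m = 1 := by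
  have := gb_symm m 0
  simpa [gb_zero_right] using this

lemma gbProd : ∀ (m j : ℕ), j ≤ m →
    (∏ i ∈ Finset.Icc 1 j, (1 - (T (i:ℤ) : K))) * gb m j
      = ∏ i ∈ Finset.Icc (m-j+1) m, (1 - (T (i:ℤ) : K)) := by
  intro m
  induction m with
  | zero =>
      intro j hj
      interval_cases j
      simp [gb_zero_right]
  | succ m ih =>
      intro j hj
      rcases Nat.eq_zero_or_pos j with rfl | hjpos
      · rw [Nat.cast_zero, gb_zero_right]
        simp [show m+1-0+1 = m+2 by omega]
      rcases eq_or_ne j (m+1) with rfl | hne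
      · have h0 : gb m ((m:ℤ)+1) = 0 := gb_of_gt m (by omega)
        rw [gb_ruleA m ((m+1:ℕ):ℤ)]
        rw [show (((m+1:ℕ):ℤ)) = (m:ℤ)+1 by push_cast; ring, h0,
            show (m:ℤ)+1-((m:ℤ)+1) = 0 by ring, show (m:ℤ)+1-1 = (m:ℤ) by ring,
            T_zero, gb_diag]
        rw [show m+1-(m+1)+1 = 1 by omega]
        ring
      · have hjm : j ≤ m := by omega
        obtain ⟨j', rfl⟩ : ∃ j', j = j' + 1 := ⟨j - 1, by omega⟩
        have hcast : (((j'+1:ℕ)):ℤ) = (j':ℤ) + 1 := by push_cast; ring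
        rw [gb_ruleA m ((j'+1:ℕ):ℤ), hcast,
            show (j':ℤ)+1-1 = (j':ℤ) by ring]
        rw [mul_add]
        have IH1 := ih (j'+1) hjm
        have IH2 := ih j' (by omega)
        rw [hcast] at IH1
        rw [IH1]
        have Psplit : (∏ i ∈ Finset.Icc 1 (j'+1), (1 - (T (i:ℤ) : K)))
            = (∏ i ∈ Finset.Icc 1 j', (1 - (T (i:ℤ) : K))) * (1 - T ((j'+1:ℕ):ℤ)) := by
          rw [Finset.prod_Icc_succ_top (by omega)]
        have step2 : (∏ i ∈ Finset.Icc 1 (j'+1), (1 - (T (i:ℤ) : K))) * (T ((m:ℤ)+1-((j':ℤ)+1)) * gb m (j':ℤ))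
            = T ((m:ℤ)-(j':ℤ)) * (1 - T ((j'+1:ℕ):ℤ)) * ∏ i ∈ Finset.Icc (m-j'+1) m, (1 - (T (i:ℤ) : K)) := by
          rw [Psplit, show (m:ℤ)+1-((j':ℤ)+1) = (m:ℤ)-(j':ℤ) by ring]
          calc (∏ i ∈ Finset.Icc 1 j', (1 - (T (i:ℤ) : K))) * (1 - T ((j'+1:ℕ):ℤ)) * (T ((m:ℤ)-(j':ℤ)) * gb m (j':ℤ))
              = T ((m:ℤ)-(j':ℤ)) * (1 - T ((j'+1:ℕ):ℤ)) * ((∏ i ∈ Finset.Icc 1 j', (1 - (T (i:ℤ) : K))) * gb m (j':ℤ)) := by ring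
            _ = _ := by rw [IH2]
        rw [step2]
        have hsplitbot : (∏ i ∈ Finset.Icc (m-(j'+1)+1) m, (1 - (T (i:ℤ) : K)))
            = (1 - T ((m-j':ℕ):ℤ)) * ∏ i ∈ Finset.Icc (m-j'+1) m, (1 - (T (i:ℤ) : K)) := by
          have h1 : m-(j'+1)+1 = m - j' := by omega
          rw [h1, ← Finset.Ico_add_one_right_eq_Icc, Finset.prod_eq_prod_Ico_succ_bot (by omega), Finset.Ico_add_one_right_eq_Icc]
        rw [hsplitbot]
        have hTcast : (T ((m-j':ℕ):ℤ) : K) = T ((m:ℤ)-(j':ℤ)) := by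
          rw [Nat.cast_sub (by omega)]
        have hTT : (T ((m:ℤ)-(j':ℤ)) : K) * T ((j'+1:ℕ):ℤ) = T ((m:ℤ)+1) := by
          rw [← T_add, hcast]; ring_nf
        have hRHS : (∏ i ∈ Finset.Icc (m+1-(j'+1)+1) (m+1), (1 - (T (i:ℤ) : K)))
            = (1 - T (((m+1:ℕ)):ℤ)) * ∏ i ∈ Finset.Icc (m-j'+1) m, (1 - (T (i:ℤ) : K)) := by
          have h1 : m+1-(j'+1)+1 = m-j'+1 := by omega
          rw [h1, Finset.prod_Icc_succ_top (by omega)]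
          ring
        rw [hRHS, show (((m+1:ℕ)):ℤ) = (m:ℤ)+1 by push_cast; ring, ← hTT]
        rw [hTcast]
        ring

/-- `tri t = t (t-1) / 2`. -/
def tri (t : ℤ) : ℤ := t * (t - 1) / 2

lemma two_tri (t : ℤ) : 2 * tri t = t * (t - 1) := by
  have h : Even (t * (t - 1)) := by
    have h := Int.even_mul_succ_self (t - 1)
    simpa [mul_comm] using h
  exact Int.two_mul_ediv_two_of_even h

lemma gbBA (m : ℕ) (k : ℤ) :
    gb (m+2) k = T k * gb m k + (1 + T ((m:ℤ)+1)) * gb m (k-1) + T ((m:ℤ)+2-k) * gb m (k-2) := by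
  have h1 : (T k : K) * T ((m:ℤ)+1-k) = T ((m:ℤ)+1) := by rw [← T_add]; ring_nf
  rw [gb_ruleB (m+1) k, gb_ruleA m k, gb_ruleA m (k-1),
    show k-1-1 = k-2 by ring, show (m:ℤ)+1-(k-1) = (m:ℤ)+2-k by ring]
  linear_combination gb m (k-1) * h1

/-- The coefficient of `x^k` in the bivariate identity. -/
noncomputable def cf (n : ℕ) (k : ℤ) : K :=
  ((Int.negOnePow k : ℤ) : K) * (T (tri (k - n)) * gb (2*n+1) k)

lemma cf_vanish_neg (n : ℕ) {k : ℤ} (h : k < 0) : cf n k = 0 := by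
  rw [cf, gb_of_neg _ h, mul_zero, mul_zero]

lemma cf_vanish_big (n : ℕ) {k : ℤ} (h : (2*n+1 : ℤ) < k) : cf n k = 0 := by
  rw [cf, gb_of_gt _ (by push_cast at h ⊢; omega), mul_zero, mul_zero]

lemma cf_rec (n : ℕ) (k : ℤ) :
    cf (n+1) k = T ((n:ℤ)+1) * cf n k - (1 + T (2*(n:ℤ)+2)) * cf n (k-1)
      + T ((n:ℤ)+1) * cf n (k-2) := by
  unfold cf
  rw [show 2*(n+1)+1 = (2*n+1)+2 by omega, gbBA (2*n+1) k,
    show ((n+1:ℕ):ℤ) = (n:ℤ)+1 by push_cast; ring,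
    show ((2*n+1:ℕ):ℤ) = 2*(n:ℤ)+1 by push_cast; ring,
    show k - ((n:ℤ)+1) = k-1-(n:ℤ) by ring,
    show 2*(n:ℤ)+1+1 = 2*(n:ℤ)+2 by ring,
    show 2*(n:ℤ)+1+2-k = 2*(n:ℤ)+3-k by ring]
  have hs1 : ((Int.negOnePow (k-1) : ℤ) : K) = -((Int.negOnePow k : ℤ) : K) := by
    have : Int.negOnePow k = -Int.negOnePow (k-1) := by
      have := Int.negOnePow_succ (k-1)
      rw [show k-1+1 = k by ring] at this
      exact this
    rw [this]; push_cast; ring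
  have hs2 : ((Int.negOnePow (k-2) : ℤ) : K) = ((Int.negOnePow k : ℤ) : K) := by
    have : Int.negOnePow k = Int.negOnePow (k-2) := by
      have := Int.negOnePow_add (k-2) 2
      rw [show k-2+2 = k by ring, show (2:ℤ) = 2*1 by norm_num,
        Int.negOnePow_two_mul, mul_one] at this
      exact this
    rw [this]
  rw [hs1, hs2]
  have hE1 : (T (tri (k-1-(n:ℤ))) : K) * T k = T ((n:ℤ)+1) * T (tri (k - (n:ℤ))) := by
    rw [← T_add, ← T_add]
    congr 1
    have h1 := two_tri (k-1-(n:ℤ)); have h2 := two_tri (k-(n:ℤ))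
    ring_nf at h1 h2 ⊢; linarith
  have hE3 : (T (tri (k-1-(n:ℤ))) : K) * T (2*(n:ℤ)+3-k) = T ((n:ℤ)+1) * T (tri (k-2-(n:ℤ))) := by
    rw [← T_add, ← T_add]
    congr 1
    have h1 := two_tri (k-1-(n:ℤ)); have h2 := two_tri (k-2-(n:ℤ))
    ring_nf at h1 h2 ⊢; linarith
  linear_combination ((Int.negOnePow k : ℤ) : K) * gb (2*n+1) k * hE1
    + ((Int.negOnePow k : ℤ) : K) * gb (2*n+1) (k-2) * hE3

noncomputable def rhsP (n : ℕ) : Polynomial K :=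
  ∑ k ∈ Finset.range (2*n+2), Polynomial.C (cf n k) * Polynomial.X ^ k

lemma coeff_rhsP (n m : ℕ) : (rhsP n).coeff m = cf n m := by
  rw [rhsP, Polynomial.finset_sum_coeff]
  simp only [Polynomial.coeff_C_mul, Polynomial.coeff_X_pow, mul_ite, mul_one, mul_zero]
  rw [Finset.sum_ite_eq (Finset.range (2*n+2)) m (fun k => cf n k)]
  by_cases h : m ∈ Finset.range (2*n+2)
  · rw [if_pos h]
  · rw [if_neg h, cf_vanish_big]
    simp only [Finset.mem_range, not_lt] at h
    push_cast; omega

noncomputable def Qf (n : ℕ) : Polynomial K :=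
  Polynomial.C (T ((n:ℤ)+1)) - Polynomial.C (1 + T (2*(n:ℤ)+2)) * Polynomial.X
    + Polynomial.C (T ((n:ℤ)+1)) * Polynomial.X ^ 2

lemma rhsP_rec (n : ℕ) : rhsP (n+1) = rhsP n * Qf n := by
  refine Polynomial.ext fun m => ?_
  have expand : rhsP n * Qf n
      = Polynomial.C (T ((n:ℤ)+1)) * rhsP n
        - Polynomial.C (1 + T (2*(n:ℤ)+2)) * (rhsP n * Polynomial.X ^ 1)
        + Polynomial.C (T ((n:ℤ)+1)) * (rhsP n * Polynomial.X ^ 2) := by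
    rw [Qf]; ring
  rw [coeff_rhsP, expand]
  simp only [Polynomial.coeff_add, Polynomial.coeff_sub, Polynomial.coeff_C_mul,
    Polynomial.coeff_mul_X_pow', coeff_rhsP]
  rw [cf_rec n m]
  rcases m with _ | m
  · rw [if_neg (by omega), if_neg (by omega)]
    push_cast
    rw [cf_vanish_neg n (show (-1:ℤ) < 0 by norm_num),
      cf_vanish_neg n (show (-2:ℤ) < 0 by norm_num)]
  rcases m with _ | m
  · rw [if_pos (by omega : (1:ℕ) ≤ 1), if_neg (by omega)]
    push_cast
    rw [cf_vanish_neg n (show (-1:ℤ) < 0 by norm_num)]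
  · have h1 : (1:ℕ) ≤ m + 2 := by omega
    have h2 : (2:ℕ) ≤ m + 2 := by omega
    rw [if_pos h1, if_pos h2]
    have e1 : ((m+2-1 : ℕ) : ℤ) = ((m+2:ℕ):ℤ) - 1 := by push_cast; omega
    have e2 : ((m+2-2 : ℕ) : ℤ) = ((m+2:ℕ):ℤ) - 2 := by push_cast; omega
    rw [e1, e2]

noncomputable def lhsP (n : ℕ) : Polynomial K :=
  (1 - Polynomial.X) * ∏ i ∈ Finset.Icc 1 n,
    ((Polynomial.C (T (i:ℤ)) - Polynomial.X) * (1 - Polynomial.C (T (i:ℤ)) * Polynomial.X))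

lemma bigG (n : ℕ) : lhsP n = rhsP n := by
  induction n with
  | zero =>
      rw [lhsP, rhsP]
      have : Finset.Icc 1 0 = (∅ : Finset ℕ) := by decide
      rw [this, Finset.prod_empty, mul_one]
      rw [show 2*0+2 = 2 by norm_num, Finset.sum_range_succ, Finset.sum_range_one]
      have c0 : cf 0 0 = 1 := by
        simp [cf, tri, gb_zero_right]
      have c1 : cf 0 1 = -1 := by
        have : gb (2*0+1) (1:ℤ) = 1 := by
          have := gb_diag 1
          simpa using this
        simp [cf, tri, this]
      rw [Nat.cast_zero, Nat.cast_one, c0, c1]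
      simp
      ring
  | succ n ih =>
      have hsplit : lhsP (n+1) = lhsP n *
          ((Polynomial.C (T (((n+1:ℕ)):ℤ)) - Polynomial.X)
            * (1 - Polynomial.C (T (((n+1:ℕ)):ℤ)) * Polynomial.X)) := by
        rw [lhsP, lhsP, Finset.prod_Icc_succ_top (by omega)]
        ring
      have hq : (Polynomial.C (T (((n+1:ℕ)):ℤ)) - Polynomial.X)
          * (1 - Polynomial.C (T (((n+1:ℕ)):ℤ)) * Polynomial.X) = Qf n := by
        rw [show (((n+1:ℕ)):ℤ) = (n:ℤ)+1 by push_cast; ring, Qf]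
        have hC : (Polynomial.C (T ((n:ℤ)+1)) : Polynomial K) * Polynomial.C (T ((n:ℤ)+1))
            = Polynomial.C (T (2*(n:ℤ)+2)) := by
          rw [← Polynomial.C_mul, ← T_add]; ring_nf
        have hCadd : (Polynomial.C (1 + T (2*(n:ℤ)+2)) : Polynomial K)
            = 1 + Polynomial.C (T (2*(n:ℤ)+2)) := by
          rw [Polynomial.C_add, Polynomial.C_1]
        rw [hCadd]
        linear_combination (-Polynomial.X) * hC
      rw [hsplit, hq, ih, rhsP_rec]

lemma tri_neg (t : ℤ) : tri (-t) = tri (t+1) := by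
  have h1 := two_tri (-t); have h2 := two_tri (t+1)
  ring_nf at h1 h2 ⊢; linarith

lemma evalD_lhs (n : ℕ) : Polynomial.eval 1 (Polynomial.derivative (lhsP n))
    = -((-1:K)^n * (∏ i ∈ Finset.Icc 1 n, (1 - (T (i:ℤ) : K)))^2) := by
  rw [lhsP, Polynomial.derivative_mul]
  simp only [Polynomial.derivative_sub, Polynomial.derivative_one, Polynomial.derivative_X,
    zero_sub, Polynomial.eval_add, Polynomial.eval_mul, Polynomial.eval_sub,
    Polynomial.eval_one, Polynomial.eval_X, Polynomial.eval_neg, sub_self, zero_mul, add_zero,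
    mul_zero]
  rw [Polynomial.eval_prod]
  have : ∀ i ∈ Finset.Icc 1 n, Polynomial.eval 1
      ((Polynomial.C (T (i:ℤ)) - Polynomial.X) * (1 - Polynomial.C (T (i:ℤ)) * Polynomial.X))
      = -(1 - (T (i:ℤ) : K))^2 := by
    intro i _
    simp only [Polynomial.eval_mul, Polynomial.eval_sub, Polynomial.eval_C, Polynomial.eval_X,
      Polynomial.eval_one, mul_one]
    ring
  rw [Finset.prod_congr rfl this]
  have hp : (∏ x ∈ Finset.Icc 1 n, -(1 - (T (x:ℤ) : K))^2)
      = (-1:K)^n * (∏ i ∈ Finset.Icc 1 n, (1 - (T (i:ℤ) : K)))^2 := by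
    calc (∏ x ∈ Finset.Icc 1 n, -(1 - (T (x:ℤ) : K))^2)
        = ∏ x ∈ Finset.Icc 1 n, ((-1) * (1 - (T (x:ℤ) : K))^2) :=
          Finset.prod_congr rfl (by intros; ring)
      _ = _ := by
          rw [Finset.prod_mul_distrib, Finset.prod_const, Finset.prod_pow, Nat.card_Icc]
          simp only [Nat.add_sub_cancel]
  rw [hp]
  ring

lemma evalD_rhs (n : ℕ) : Polynomial.eval 1 (Polynomial.derivative (rhsP n))
    = ∑ k ∈ Finset.range (2*n+2), cf n k * (k : K) := by
  rw [rhsP, map_sum, Polynomial.eval_finset_sum]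
  refine Finset.sum_congr rfl fun k _ => ?_
  rw [Polynomial.derivative_C_mul_X_pow, Polynomial.eval_mul, Polynomial.eval_C,
    Polynomial.eval_pow, Polynomial.eval_X, one_pow, mul_one]

lemma pair_term (n j : ℕ) (hj : j ≤ n) :
    -((-1:K)^n * (cf n ((n-j : ℕ):ℤ) * ((n-j : ℕ) : K)))
      + -((-1:K)^n * (cf n ((n+1+j : ℕ):ℤ) * ((n+1+j : ℕ) : K)))
      = (((-1:ℤ)^j * (2*(j:ℤ)+1) : ℤ) : K) * (T (tri ((j:ℤ)+1)) * gb (2*n+1) ((n:ℤ)-(j:ℤ))) := by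
  have e1 : ((n-j : ℕ):ℤ) = (n:ℤ)-(j:ℤ) := by
    rw [Nat.cast_sub hj]
  rw [e1]
  unfold cf
  rw [show (n:ℤ)-(j:ℤ) - (n:ℤ) = -(j:ℤ) by ring, tri_neg,
    show ((n+1+j:ℕ):ℤ) = (n:ℤ)+1+(j:ℤ) by push_cast; ring,
    show (n:ℤ)+1+(j:ℤ) - (n:ℤ) = (j:ℤ)+1 by ring]
  have egb : gb (2*n+1) ((n:ℤ)+1+(j:ℤ)) = gb (2*n+1) ((n:ℤ)-(j:ℤ)) := by
    have h := gb_symm (2*n+1) ((n:ℤ)+1+(j:ℤ))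
    rw [show ((2*n+1:ℕ):ℤ) - ((n:ℤ)+1+(j:ℤ)) = (n:ℤ)-(j:ℤ) by push_cast; ring] at h
    exact h.symm
  rw [egb]
  have s1 : ((Int.negOnePow ((n:ℤ)-(j:ℤ)) : ℤ) : K) = (-1:K)^n * (-1:K)^j := by
    rw [Int.negOnePow_sub]
    push_cast [Int.cast_negOnePow_natCast]
    ring_nf
  have s2 : ((Int.negOnePow ((n:ℤ)+1+(j:ℤ)) : ℤ) : K) = -((-1:K)^n * (-1:K)^j) := by
    rw [show (n:ℤ)+1+(j:ℤ) = ((n:ℤ)+(j:ℤ))+1 by ring, Int.negOnePow_succ, Int.negOnePow_add]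
    push_cast [Int.cast_negOnePow_natCast]
    ring_nf
  rw [s1, s2]
  have c1 : (((n-j:ℕ)) : K) = (n:K) - (j:K) := by
    push_cast [hj]
    ring
  rw [c1]
  have hu : (-1:K)^n * (-1:K)^n = 1 := by
    rw [← pow_add]
    exact Even.neg_one_pow ⟨n, rfl⟩
  push_cast
  linear_combination ((-1:K)^j * (T (tri ((j:ℤ)+1)) * gb (2*n+1) ((n:ℤ)-(j:ℤ))) * (2*(j:K)+1)) * hu

lemma pairing (n : ℕ) :
    (∏ i ∈ Finset.Icc 1 n, (1 - (T (i:ℤ) : K)))^2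
      = ∑ j ∈ Finset.range (n+1),
          (((-1:ℤ)^j * (2*(j:ℤ)+1) : ℤ) : K) * (T (tri ((j:ℤ)+1)) * gb (2*n+1) ((n:ℤ)-(j:ℤ))) := by
  have h := congrArg (fun p => Polynomial.eval 1 (Polynomial.derivative p)) (bigG n)
  rw [evalD_lhs, evalD_rhs] at h
  -- h : -((-1)^n * Q^2) = ∑ k ∈ range (2n+2), cf n k * k
  have key : (∏ i ∈ Finset.Icc 1 n, (1 - (T (i:ℤ) : K)))^2
      = ∑ k ∈ Finset.range (2*n+2), -((-1:K)^n * (cf n (k:ℤ) * (k : K))) := by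
    have hsum : (∑ k ∈ Finset.range (2*n+2), -((-1:K)^n * (cf n (k:ℤ) * (k : K))))
        = -((-1:K)^n * ∑ k ∈ Finset.range (2*n+2), cf n (k:ℤ) * (k : K)) := by
      rw [Finset.mul_sum, ← Finset.sum_neg_distrib]
    rw [hsum, ← h]
    have hu2 : (-1:K)^(n*2) = 1 := Even.neg_one_pow ⟨n, by ring⟩
    linear_combination (-((∏ i ∈ Finset.Icc 1 n, (1 - (T (i:ℤ) : K)))^2)) * hu2
  rw [key, show 2*n+2 = (n+1)+(n+1) by omega, Finset.sum_range_add]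
  have hrefl := Finset.sum_range_reflect
    (fun k => -((-1:K)^n * (cf n (k:ℤ) * (k : K)))) (n+1)
  simp only [Nat.add_sub_cancel] at hrefl
  rw [← hrefl, ← Finset.sum_add_distrib]
  refine Finset.sum_congr rfl fun j hj => ?_
  have hjn : j ≤ n := by
    simp only [Finset.mem_range] at hj; omega
  have := pair_term n j hjn
  exact this

lemma diamondK (n : ℕ) :
    (∏ i ∈ Finset.Icc 1 n, (1 - (T (i:ℤ) : K)))^3
      = ∑ j ∈ Finset.range (n+1), (((-1:ℤ)^j * (2*(j:ℤ)+1) : ℤ) : K)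
          * (T (tri ((j:ℤ)+1)) * ((∏ i ∈ Finset.Icc (n-j+1) n, (1 - (T (i:ℤ):K)))
             * (∏ i ∈ Finset.Icc (n+j+2) (2*n+1), (1 - (T (i:ℤ):K))))) := by
  calc (∏ i ∈ Finset.Icc 1 n, (1 - (T (i:ℤ) : K)))^3
      = (∏ i ∈ Finset.Icc 1 n, (1 - (T (i:ℤ) : K)))
        * (∏ i ∈ Finset.Icc 1 n, (1 - (T (i:ℤ) : K)))^2 := by ring
    _ = ∑ j ∈ Finset.range (n+1), (∏ i ∈ Finset.Icc 1 n, (1 - (T (i:ℤ) : K)))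
          * ((((-1:ℤ)^j * (2*(j:ℤ)+1) : ℤ) : K)
            * (T (tri ((j:ℤ)+1)) * gb (2*n+1) ((n:ℤ)-(j:ℤ)))) := by
        rw [pairing n, Finset.mul_sum]
    _ = _ := by
        refine Finset.sum_congr rfl fun j hj => ?_
        have hjn : j ≤ n := by simp only [Finset.mem_range] at hj; omega
        have hsplitQ : (∏ i ∈ Finset.Icc 1 n, (1 - (T (i:ℤ) : K)))
            = (∏ i ∈ Finset.Icc 1 (n-j), (1 - (T (i:ℤ) : K)))
              * (∏ i ∈ Finset.Icc (n-j+1) n, (1 - (T (i:ℤ) : K))) := by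
          rw [Finset.Icc_add_one_left_eq_Ioc, show (1:ℕ) = 0 + 1 from rfl, Finset.Icc_add_one_left_eq_Ioc, Finset.Icc_add_one_left_eq_Ioc,
            Finset.prod_Ioc_consecutive _ (by omega : 0 ≤ n - j) (by omega : n - j ≤ n)]
        have hgb := gbProd (2*n+1) (n-j) (by omega)
        rw [show 2*n+1-(n-j)+1 = n+j+2 by omega, Nat.cast_sub hjn] at hgb
        rw [hsplitQ]
        calc (∏ i ∈ Finset.Icc 1 (n-j), (1 - (T (i:ℤ) : K)))
              * (∏ i ∈ Finset.Icc (n-j+1) n, (1 - (T (i:ℤ) : K)))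
              * ((((-1:ℤ)^j * (2*(j:ℤ)+1) : ℤ) : K)
                * (T (tri ((j:ℤ)+1)) * gb (2*n+1) ((n:ℤ)-(j:ℤ))))
            = (((-1:ℤ)^j * (2*(j:ℤ)+1) : ℤ) : K) * (T (tri ((j:ℤ)+1))
                * ((∏ i ∈ Finset.Icc (n-j+1) n, (1 - (T (i:ℤ) : K)))
                  * ((∏ i ∈ Finset.Icc 1 (n-j), (1 - (T (i:ℤ) : K)))
                    * gb (2*n+1) ((n:ℤ)-(j:ℤ))))) := by ring
          _ = _ := by rw [hgb]

lemma tri_nat (j : ℕ) : ((j*(j+1)/2 : ℕ) : ℤ) = tri ((j:ℤ)+1) := by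
  have he : j*(j+1)/2*2 = j*(j+1) := Nat.div_mul_cancel (Nat.even_mul_succ_self j).two_dvd
  have h1 := two_tri ((j:ℤ)+1)
  have h2 : ((j*(j+1)/2 : ℕ) : ℤ) * 2 = (j:ℤ)*((j:ℤ)+1) := by
    exact_mod_cast congrArg (Nat.cast : ℕ → ℤ) he
  ring_nf at h1 h2 ⊢
  linarith

lemma diamondP (n : ℕ) :
    (∏ i ∈ Finset.Icc 1 n, (1 - (Polynomial.X : Polynomial ℤ)^i))^3
      = ∑ j ∈ Finset.range (n+1), Polynomial.C ((-1:ℤ)^j * (2*(j:ℤ)+1))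
          * (Polynomial.X^(j*(j+1)/2)
            * ((∏ i ∈ Finset.Icc (n-j+1) n, (1 - (Polynomial.X:Polynomial ℤ)^i))
              * (∏ i ∈ Finset.Icc (n+j+2) (2*n+1), (1 - (Polynomial.X:Polynomial ℤ)^i)))) := by
  apply Polynomial.toLaurent_injective
  rw [map_pow, map_prod, map_sum]
  simp only [map_mul, map_sub, map_one, map_pow, map_prod, Polynomial.toLaurent_X,
    LaurentPolynomial.T_pow, mul_one, Polynomial.toLaurent_C, tri_nat]
  have hC : ∀ a : ℤ, (LaurentPolynomial.C a : K) = ((a : ℤ) : K) := fun a => by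
    rw [eq_intCast LaurentPolynomial.C a]
  simp only [hC]
  push_cast
  have := diamondK n
  push_cast at this
  convert this using 2

/-- `f m` is the formal power series `∏_{k ≥ 1} (1 - q^{m k})` (for `m ≥ 1`),
realized via the fact that its `n`-th coefficient equals that of the
finite product `∏_{k=1}^{n} (1 - q^{m k})`. -/
noncomputable def f (m : ℕ) : PowerSeries ℤ :=
  PowerSeries.mk fun n =>
    PowerSeries.coeff (R := ℤ) n (∏ k ∈ Finset.Icc 1 n, (1 - (PowerSeries.X : PowerSeries ℤ) ^ (m * k)))

namespace JacobiAux

open PowerSeries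

lemma X_pow_dvd_prod_sub_one (d : ℕ) (s : Finset ℕ) (h : ∀ k ∈ s, d ≤ k) :
    (PowerSeries.X : PowerSeries ℤ)^d ∣ (∏ k ∈ s, (1 - PowerSeries.X^k)) - 1 := by
  classical
  induction s using Finset.induction_on with
  | empty => simp
  | @insert a s' ha ih =>
      rw [Finset.prod_insert ha]
      have key : (1 - (PowerSeries.X : PowerSeries ℤ)^a) * (∏ k ∈ s', (1 - PowerSeries.X^k)) - 1
          = ((∏ k ∈ s', (1 - (PowerSeries.X : PowerSeries ℤ)^k)) - 1)
            - PowerSeries.X^a * (∏ k ∈ s', (1 - PowerSeries.X^k)) := by ring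
      rw [key]
      refine dvd_sub (ih fun k hk => h k (Finset.mem_insert_of_mem hk)) ?_
      exact Dvd.dvd.mul_right (pow_dvd_pow _ (h a (Finset.mem_insert_self a s'))) _

lemma coeff_eq_zero_of_dvd {d m : ℕ} {φ : PowerSeries ℤ}
    (h : (PowerSeries.X : PowerSeries ℤ)^d ∣ φ) (hm : m < d) : PowerSeries.coeff (R := ℤ) m φ = 0 :=
  (PowerSeries.X_pow_dvd_iff.mp h) m hm

lemma coeff_trunc_stable {n N : ℕ} (h : n ≤ N) :
    PowerSeries.coeff (R := ℤ) n (∏ k ∈ Finset.Icc 1 N, (1 - PowerSeries.X^k))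
      = PowerSeries.coeff (R := ℤ) n (∏ k ∈ Finset.Icc 1 n, (1 - PowerSeries.X^k)) := by
  have hsplit : (∏ k ∈ Finset.Icc 1 N, (1 - (PowerSeries.X : PowerSeries ℤ)^k))
      = (∏ k ∈ Finset.Icc 1 n, (1 - PowerSeries.X^k))
        * (∏ k ∈ Finset.Icc (n+1) N, (1 - PowerSeries.X^k)) := by
    rw [Finset.Icc_add_one_left_eq_Ioc, show (1:ℕ) = 0 + 1 from rfl, Finset.Icc_add_one_left_eq_Ioc, Finset.Icc_add_one_left_eq_Ioc,
      Finset.prod_Ioc_consecutive _ (Nat.zero_le n) h]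
  rw [hsplit]
  have hdvd : (PowerSeries.X : PowerSeries ℤ)^(n+1)
      ∣ (∏ k ∈ Finset.Icc 1 n, (1 - PowerSeries.X^k))
        * ((∏ k ∈ Finset.Icc (n+1) N, (1 - PowerSeries.X^k)) - 1) := by
    refine Dvd.dvd.mul_left ?_ _
    exact X_pow_dvd_prod_sub_one (n+1) _ fun k hk => by
      simp only [Finset.mem_Icc] at hk; omega
  have expand : (∏ k ∈ Finset.Icc 1 n, (1 - (PowerSeries.X : PowerSeries ℤ)^k))
      * (∏ k ∈ Finset.Icc (n+1) N, (1 - PowerSeries.X^k))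
      = (∏ k ∈ Finset.Icc 1 n, (1 - PowerSeries.X^k))
        + (∏ k ∈ Finset.Icc 1 n, (1 - PowerSeries.X^k))
          * ((∏ k ∈ Finset.Icc (n+1) N, (1 - PowerSeries.X^k)) - 1) := by ring
  rw [expand, map_add, coeff_eq_zero_of_dvd hdvd (by omega), add_zero]

lemma coeff_f_one (n : ℕ) : PowerSeries.coeff (R := ℤ) n (f 1)
    = PowerSeries.coeff (R := ℤ) n (∏ k ∈ Finset.Icc 1 n, (1 - PowerSeries.X^k)) := by
  rw [f, PowerSeries.coeff_mk]
  simp only [one_mul]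

lemma f_cube_coeff (N : ℕ) : PowerSeries.coeff (R := ℤ) N ((f 1)^3)
    = PowerSeries.coeff (R := ℤ) N ((∏ k ∈ Finset.Icc 1 N, (1 - PowerSeries.X^k))^3) := by
  set P : PowerSeries ℤ := ∏ k ∈ Finset.Icc 1 N, (1 - PowerSeries.X^k) with hP
  have hdvd : (PowerSeries.X : PowerSeries ℤ)^(N+1) ∣ f 1 - P := by
    rw [PowerSeries.X_pow_dvd_iff]
    intro m hm
    rw [map_sub, coeff_f_one, hP, coeff_trunc_stable (by omega : m ≤ N), sub_self]
  have hcube : (PowerSeries.X : PowerSeries ℤ)^(N+1) ∣ (f 1)^3 - P^3 := by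
    have factor : (f 1)^3 - P^3 = (f 1 - P) * ((f 1)^2 + (f 1)*P + P^2) := by ring
    rw [factor]
    exact Dvd.dvd.mul_right hdvd _
  have := coeff_eq_zero_of_dvd hcube (by omega : N < N+1)
  rw [map_sub, sub_eq_zero] at this
  exact this

lemma diamondPS (n : ℕ) :
    ((∏ i ∈ Finset.Icc 1 n, (1 - (PowerSeries.X : PowerSeries ℤ)^i))^3 : PowerSeries ℤ)
      = ∑ j ∈ Finset.range (n+1), (PowerSeries.C (R := ℤ)) ((-1:ℤ)^j * (2*(j:ℤ)+1))
          * (PowerSeries.X^(j*(j+1)/2)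
            * ((∏ i ∈ Finset.Icc (n-j+1) n, (1 - (PowerSeries.X : PowerSeries ℤ)^i))
              * (∏ i ∈ Finset.Icc (n+j+2) (2*n+1), (1 - (PowerSeries.X : PowerSeries ℤ)^i)))) := by
  have h := congrArg (Polynomial.coeToPowerSeries.ringHom (R := ℤ)) (diamondP n)
  simpa only [map_pow, map_prod, map_sum, map_mul, map_sub, map_one,
    Polynomial.coeToPowerSeries.ringHom_apply, Polynomial.coe_X, Polynomial.coe_C] using h

lemma le_triangle (j : ℕ) : j ≤ j*(j+1)/2 := by
  rcases Nat.eq_zero_or_pos j with rfl | hj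
  · simp
  · rw [Nat.le_div_iff_mul_le (by norm_num)]
    have : 2 ≤ j + 1 := by omega
    calc j * 2 ≤ j * (j+1) := Nat.mul_le_mul_left j this
      _ = j * (j+1) := rfl

lemma coeff_term (N j : ℕ) (hj : j ≤ N) :
    PowerSeries.coeff (R := ℤ) N ((PowerSeries.C (R := ℤ)) ((-1:ℤ)^j * (2*(j:ℤ)+1))
      * (PowerSeries.X^(j*(j+1)/2)
        * ((∏ i ∈ Finset.Icc (N-j+1) N, (1 - (PowerSeries.X : PowerSeries ℤ)^i))
          * (∏ i ∈ Finset.Icc (N+j+2) (2*N+1), (1 - (PowerSeries.X : PowerSeries ℤ)^i)))))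
      = if j*(j+1)/2 = N then (-1:ℤ)^j * (2*(j:ℤ)+1) else 0 := by
  set B : PowerSeries ℤ := (∏ i ∈ Finset.Icc (N-j+1) N, (1 - (PowerSeries.X : PowerSeries ℤ)^i))
      * (∏ i ∈ Finset.Icc (N+j+2) (2*N+1), (1 - (PowerSeries.X : PowerSeries ℤ)^i)) with hB
  rw [PowerSeries.coeff_C_mul]
  set e := j*(j+1)/2 with he
  have hBdvd : (PowerSeries.X : PowerSeries ℤ)^(N-j+1) ∣ B - 1 := by
    have h1 := X_pow_dvd_prod_sub_one (N-j+1) (Finset.Icc (N-j+1) N)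
      (fun k hk => by simp only [Finset.mem_Icc] at hk; omega)
    have h2 := X_pow_dvd_prod_sub_one (N-j+1) (Finset.Icc (N+j+2) (2*N+1))
      (fun k hk => by simp only [Finset.mem_Icc] at hk; omega)
    have expand : B - 1 = (∏ i ∈ Finset.Icc (N-j+1) N, (1 - (PowerSeries.X : PowerSeries ℤ)^i))
        * ((∏ i ∈ Finset.Icc (N+j+2) (2*N+1), (1 - (PowerSeries.X : PowerSeries ℤ)^i)) - 1)
        + ((∏ i ∈ Finset.Icc (N-j+1) N, (1 - (PowerSeries.X : PowerSeries ℤ)^i)) - 1) := by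
      rw [hB]; ring
    rw [expand]
    exact dvd_add (Dvd.dvd.mul_left h2 _) h1
  by_cases hle : e ≤ N
  · have hXB : PowerSeries.coeff (R := ℤ) N (PowerSeries.X^e * B)
        = PowerSeries.coeff (R := ℤ) (N - e) B := by
      conv_lhs => rw [show N = (N - e) + e by omega]
      exact PowerSeries.coeff_X_pow_mul B e (N - e)
    rw [hXB]
    have hBsplit : PowerSeries.coeff (R := ℤ) (N - e) B
        = PowerSeries.coeff (R := ℤ) (N - e) 1 + PowerSeries.coeff (R := ℤ) (N - e) (B - 1) := by
      rw [← map_add]; norm_num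
    by_cases heN : e = N
    · rw [if_pos heN, hBsplit, heN, Nat.sub_self, PowerSeries.coeff_one, if_pos rfl,
        coeff_eq_zero_of_dvd hBdvd (by omega), add_zero, mul_one]
    · rw [if_neg heN, hBsplit, PowerSeries.coeff_one, if_neg (by omega),
        coeff_eq_zero_of_dvd hBdvd (by have := le_triangle j; omega), add_zero, mul_zero]
  · rw [if_neg (by omega)]
    have : PowerSeries.coeff (R := ℤ) N (PowerSeries.X^e * B) = 0 :=
      coeff_eq_zero_of_dvd (dvd_mul_right _ _) (by omega)
    rw [this, mul_zero]

end JacobiAux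

/-- Jacobi's identity: `f_1^3 = ∑_{j ≥ 0} (-1)^j (2j+1) q^{j(j+1)/2}`. -/
theorem jacobi_identity :
    (f 1) ^ 3 =
      PowerSeries.mk (fun n =>
        ∑ j ∈ Finset.range (n + 1),
          if j * (j + 1) / 2 = n then (-1 : ℤ) ^ j * (2 * j + 1) else 0) := by
  refine PowerSeries.ext fun N => ?_
  rw [PowerSeries.coeff_mk, JacobiAux.f_cube_coeff, JacobiAux.diamondPS, map_sum]
  refine Finset.sum_congr rfl fun j hj => ?_
  have hjN : j ≤ N := by simp only [Finset.mem_range] at hj; omega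
  exact JacobiAux.coeff_term N j hjN
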